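/- (Theorem 1) Let N = ∏_{i=1}^{I} f_i be a factorization of N into (not necessarily distinct) primes with f₁ ≤ ... ≤ f_I, and let θ₀, θ₁,...,θ_K be angles with cos θ_k ≠ cos θ₀ for all k, where K ≤ I. Then for any d_min > 0 there exists x ∈ ℝ^N with |x_m − x_n| ≥ d_min for all m ≠ n such that a(x,θ_k)^H a(x,θ₀) = 0 for all k = 1,...,K. -/

import Mathlib

open Complex Finset
open Complex Finset

noncomputable def tval (F : ℕ → ℕ) (D : ℕ → ℝ) (K : ℕ) (i : ℕ) (A : ℝ) : ℝ :=
  if i < K then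
    (2 * Real.pi * ((F i : ℝ) * (⌈A * |D i| * (F i) / (2 * Real.pi)⌉₊ : ℝ) + 1)) / (D i * F i)
  else A

noncomputable def aseq (F : ℕ → ℕ) (D : ℕ → ℝ) (K : ℕ) (dmin : ℝ) : ℕ → ℝ
  | 0 => dmin
  | i + 1 => aseq F D K dmin i + |tval F D K i (aseq F D K dmin i)| * ((F i : ℝ) - 1)

noncomputable def tseq (F : ℕ → ℕ) (D : ℕ → ℝ) (K : ℕ) (dmin : ℝ) (i : ℕ) : ℝ :=
  tval F D K i (aseq F D K dmin i)

lemma aseq_eq (F : ℕ → ℕ) (D : ℕ → ℝ) (K : ℕ) (dmin : ℝ) (i : ℕ) :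
    aseq F D K dmin i = dmin + ∑ j ∈ Finset.range i, |tseq F D K dmin j| * ((F j : ℝ) - 1) := by
  induction i with
  | zero => simp [aseq]
  | succ n ih => rw [aseq, ← tseq, ih, Finset.sum_range_succ]; ring

lemma tseq_ge (F : ℕ → ℕ) (D : ℕ → ℝ) (K : ℕ) (dmin : ℝ) (i : ℕ)
    (hF : 1 ≤ F i) (hD : i < K → D i ≠ 0) :
    aseq F D K dmin i ≤ |tseq F D K dmin i| := by
  set A := aseq F D K dmin i with hA
  rw [tseq, tval]
  split_ifs with h
  · have hD' : D i ≠ 0 := hD h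
    have hFpos : (0:ℝ) < (F i : ℝ) := by exact_mod_cast hF
    have hπ : (0:ℝ) < 2 * Real.pi := by positivity
    set M : ℕ := ⌈A * |D i| * (F i) / (2 * Real.pi)⌉₊ with hM
    have h1 : A * |D i| * (F i) / (2 * Real.pi) ≤ (M : ℝ) := Nat.le_ceil _
    have hF' : (1:ℝ) ≤ (F i : ℝ) := by exact_mod_cast hF
    have h2 : (M : ℝ) ≤ (F i : ℝ) * M + 1 := by
      nlinarith [Nat.cast_nonneg (α := ℝ) M]
    have habs : |(2 * Real.pi * ((F i : ℝ) * M + 1)) / (D i * F i)|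
        = (2 * Real.pi * ((F i : ℝ) * M + 1)) / (|D i| * F i) := by
      rw [abs_div, abs_of_pos (by positivity), abs_mul, abs_of_pos hFpos]
    rw [habs]
    rw [le_div_iff₀ (by positivity : (0:ℝ) < |D i| * F i)]
    have := mul_le_mul_of_nonneg_right (h1.trans h2) hπ.le
    calc A * (|D i| * F i) = (A * |D i| * F i / (2 * Real.pi)) * (2 * Real.pi) := by
          rw [div_mul_cancel₀ _ hπ.ne']; ring
      _ ≤ ((F i : ℝ) * M + 1) * (2 * Real.pi) := this
      _ = 2 * Real.pi * ((F i : ℝ) * M + 1) := by ring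
  · exact le_abs_self A

lemma tseq_null (F : ℕ → ℕ) (D : ℕ → ℝ) (K : ℕ) (dmin : ℝ) (i : ℕ)
    (hF : 2 ≤ F i) (hD : D i ≠ 0) (hi : i < K) :
    ∃ m : ℕ, ¬ (F i ∣ m) ∧ D i * tseq F D K dmin i = 2 * Real.pi * m / F i := by
  set A := aseq F D K dmin i
  set M : ℕ := ⌈A * |D i| * (F i) / (2 * Real.pi)⌉₊ with hM
  refine ⟨F i * M + 1, ?_, ?_⟩
  · intro hdvd
    have := Nat.dvd_sub hdvd ⟨M, rfl⟩
    simp at this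
    omega
  · rw [tseq, tval, if_pos hi]
    have hFpos : (0:ℝ) < (F i : ℝ) := by positivity
    push_cast
    field_simp
    rw [hM]; simp only [A]; ring_nf

lemma sep (F : ℕ → ℕ) (D : ℕ → ℝ) (K : ℕ) (dmin : ℝ) (I : ℕ)
    (hF : ∀ j, 1 ≤ F j) (hD : ∀ j, j < K → D j ≠ 0)
    (d d' : ℕ → ℕ) (hd : ∀ j, d j < F j) (hd' : ∀ j, d' j < F j)
    (hne : ∃ j, j < I ∧ d j ≠ d' j) :
    dmin ≤ |∑ j ∈ Finset.range I, tseq F D K dmin j * ((d j : ℝ) - (d' j : ℝ))| := by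
  classical
  set t := tseq F D K dmin with ht
  set S : Finset ℕ := (Finset.range I).filter (fun j => d j ≠ d' j) with hS
  have hSne : S.Nonempty := by
    obtain ⟨j, hj, hjne⟩ := hne
    exact ⟨j, by simp [hS, Finset.mem_filter, hj, hjne]⟩
  set i : ℕ := S.max' hSne with hi
  have hiS : i ∈ S := S.max'_mem hSne
  have hiI : i < I := by
    have := Finset.mem_filter.mp hiS
    simpa using this.1
  have hdi : d i ≠ d' i := (Finset.mem_filter.mp hiS).2
  -- reduce sum to range (i+1)
  have hsum : ∑ j ∈ Finset.range I, t j * ((d j : ℝ) - (d' j : ℝ))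
      = ∑ j ∈ Finset.range (i+1), t j * ((d j : ℝ) - (d' j : ℝ)) := by
    refine (Finset.sum_subset (Finset.range_subset_range.mpr hiI) ?_).symm
    intro j hjI hj
    have hji : i < j := by
      simp only [Finset.mem_range, not_lt] at hj
      omega
    have : d j = d' j := by
      by_contra hne'
      have : j ∈ S := by
        simp only [hS, Finset.mem_filter]
        exact ⟨hjI, hne'⟩
      exact absurd (S.le_max' j this) (by omega)
    rw [this]; ring
  rw [hsum, Finset.sum_range_succ]
  set R := ∑ j ∈ Finset.range i, t j * ((d j : ℝ) - (d' j : ℝ)) with hR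
  have hΔbound : ∀ j, |(d j : ℝ) - (d' j : ℝ)| ≤ (F j : ℝ) - 1 := by
    intro j
    have h1 : (d j : ℝ) + 1 ≤ F j := by exact_mod_cast hd j
    have h2 : (d' j : ℝ) + 1 ≤ F j := by exact_mod_cast hd' j
    have h3 : (0:ℝ) ≤ d j := Nat.cast_nonneg _
    have h4 : (0:ℝ) ≤ d' j := Nat.cast_nonneg _
    rw [abs_sub_le_iff]
    constructor <;> linarith
  have hRbound : |R| ≤ aseq F D K dmin i - dmin := by
    have : |R| ≤ ∑ j ∈ Finset.range i, |t j| * ((F j : ℝ) - 1) := by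
      refine (Finset.abs_sum_le_sum_abs _ _).trans ?_
      apply Finset.sum_le_sum
      intro j _
      rw [abs_mul]
      exact mul_le_mul_of_nonneg_left (hΔbound j) (abs_nonneg _)
    rw [aseq_eq]
    linarith
  have hΔ1 : (1:ℝ) ≤ |(d i : ℝ) - (d' i : ℝ)| := by
    rcases lt_or_gt_of_ne hdi with h | h
    · have : (d i : ℝ) + 1 ≤ d' i := by exact_mod_cast h
      rw [abs_sub_comm, _root_.abs_of_nonneg (by linarith : (0:ℝ) ≤ (d' i : ℝ) - d i)]
      linarith
    · have : (d' i : ℝ) + 1 ≤ d i := by exact_mod_cast h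
      rw [_root_.abs_of_nonneg (by linarith : (0:ℝ) ≤ (d i : ℝ) - d' i)]
      linarith
  have htge : aseq F D K dmin i ≤ |t i| := tseq_ge F D K dmin i (hF i) (hD i)
  have hterm : aseq F D K dmin i ≤ |t i * ((d i : ℝ) - (d' i : ℝ))| := by
    rw [abs_mul]
    nlinarith [abs_nonneg (t i)]
  have key := abs_sub_abs_le_abs_sub (t i * ((d i : ℝ) - (d' i : ℝ))) (-R)
  simp only [abs_neg, sub_neg_eq_add] at key
  have : |t i * ((d i : ℝ) - (d' i : ℝ)) + R| = |R + t i * ((d i : ℝ) - (d' i : ℝ))| := by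
    rw [add_comm]
  linarith [this ▸ key]

lemma geom_null (z : ℂ) (n : ℕ) (hz : z ≠ 1) (h1 : z ^ n = 1) :
    ∑ j : Fin n, z ^ (j : ℕ) = 0 := by
  rw [Fin.sum_univ_eq_sum_range (fun j => z ^ j) n, geom_sum_eq hz, h1]
  simp

/-- Theorem 1: if `N = ∏_{i=1}^{I} f_i` with the `f_i` primes sorted in non-decreasing
order and `K ≤ I`, then for any null directions `θ₁,…,θ_K` with `cos θ_k ≠ cos θ₀`
there exists an APV `x` with pairwise spacing `≥ d_min` satisfying the SVO condition
`a(x,θ_k)ᴴ a(x,θ₀) = 0` for all `k`. -/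
theorem stmt_10 (I K N : ℕ) (f : Fin I → ℕ) (hf : ∀ i, Nat.Prime (f i))
    (hsorted : Monotone f) (hN : N = ∏ i, f i) (hK : K ≤ I)
    (lam dmin : ℝ) (hlam : 0 < lam) (hdmin : 0 < dmin)
    (θ₀ : ℝ) (θ : Fin K → ℝ) (hθ : ∀ k, Real.cos (θ k) ≠ Real.cos θ₀) :
    ∃ x : Fin N → ℝ,
      (∀ m n : Fin N, m ≠ n → dmin ≤ |x m - x n|) ∧
      ∀ k : Fin K,
        (∑ n : Fin N,
          (starRingEnd ℂ) (Complex.exp (Complex.I * ((2 * Real.pi / lam) * x n * Real.cos (θ k) : ℝ))) *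
            Complex.exp (Complex.I * ((2 * Real.pi / lam) * x n * Real.cos θ₀ : ℝ))) = 0 := by
  classical
  set F : ℕ → ℕ := fun i => if h : i < I then f ⟨i, h⟩ else 2 with hFdef
  set D : ℕ → ℝ := fun k =>
    if h : k < K then (2 * Real.pi / lam) * (Real.cos θ₀ - Real.cos (θ ⟨k, h⟩)) else 1 with hDdef
  have hF1 : ∀ j, 1 ≤ F j := by
    intro j
    simp only [hFdef]
    split_ifs with h
    · exact (hf ⟨j, h⟩).two_le.trans' (by norm_num)
    · norm_num
  have hF2 : ∀ j (h : j < I), F j = f ⟨j, h⟩ := by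
    intro j h; simp only [hFdef, dif_pos h]
  have hD0 : ∀ j, j < K → D j ≠ 0 := by
    intro j h
    simp only [hDdef, dif_pos h]
    have h1 : (0:ℝ) < 2 * Real.pi / lam := by positivity
    have h2 : Real.cos θ₀ - Real.cos (θ ⟨j, h⟩) ≠ 0 := sub_ne_zero.mpr (Ne.symm (hθ ⟨j, h⟩))
    exact mul_ne_zero h1.ne' h2
  set t : ℕ → ℝ := tseq F D K dmin with htdef
  have hcard : Fintype.card (∀ i : Fin I, Fin (f i)) = N := by
    simp [Fintype.card_pi, hN]
  set e : (∀ i : Fin I, Fin (f i)) ≃ Fin N := Fintype.equivFinOfCardEq hcard with hedef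
  set dig : Fin N → ℕ → ℕ := fun n j => if h : j < I then ((e.symm n) ⟨j, h⟩ : ℕ) else 0
    with hdig
  refine ⟨fun n => ∑ j ∈ Finset.range I, t j * dig n j, ?_, ?_⟩
  · -- spacing
    intro m n hmn
    have hdlt : ∀ (p : Fin N) j, dig p j < F j := by
      intro p j
      simp only [hdig, hFdef]
      split_ifs with h
      · exact (e.symm p ⟨j, h⟩).isLt
      · norm_num
    have hne : ∃ j, j < I ∧ dig m j ≠ dig n j := by
      have h1 : e.symm m ≠ e.symm n := fun h => hmn (e.symm.injective h)
      have h2 : ∃ i : Fin I, e.symm m i ≠ e.symm n i := by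
        by_contra hc
        push_neg at hc
        exact h1 (funext hc)
      obtain ⟨i, hi⟩ := h2
      refine ⟨i.val, i.isLt, ?_⟩
      simp only [hdig, dif_pos i.isLt]
      intro h
      exact hi (Fin.val_injective (by simpa using h))
    have := sep F D K dmin I hF1 hD0 (dig m) (dig n) (hdlt m) (hdlt n) hne
    have heq : (∑ j ∈ Finset.range I, t j * dig m j) - (∑ j ∈ Finset.range I, t j * dig n j)
        = ∑ j ∈ Finset.range I, t j * ((dig m j : ℝ) - (dig n j : ℝ)) := by
      rw [← Finset.sum_sub_distrib]
      exact Finset.sum_congr rfl fun j _ => by ring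
    rw [heq]
    exact this
  · -- null condition
    intro k
    have hkI : (k : ℕ) < I := lt_of_lt_of_le k.isLt hK
    set δ : ℝ := D k.val with hδ
    have hδval : δ = (2 * Real.pi / lam) * (Real.cos θ₀ - Real.cos (θ k)) := by
      simp only [hδ, hDdef, dif_pos k.isLt, Fin.eta]
    -- rewrite each term
    have hterm : ∀ y : ℝ,
        (starRingEnd ℂ) (Complex.exp (Complex.I * ((2 * Real.pi / lam) * y * Real.cos (θ k) : ℝ))) *
          Complex.exp (Complex.I * ((2 * Real.pi / lam) * y * Real.cos θ₀ : ℝ))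
        = Complex.exp (Complex.I * ((δ * y : ℝ) : ℂ)) := by
      intro y
      rw [← Complex.exp_conj, ← Complex.exp_add]
      congr 1
      rw [map_mul, Complex.conj_I, Complex.conj_ofReal, hδval]
      push_cast
      ring
    simp only [hterm]
    rw [← Equiv.sum_comp e (fun n => Complex.exp (Complex.I *
      (((δ * ∑ j ∈ Finset.range I, t j * dig n j : ℝ)) : ℂ)))]
    have hdig_e : ∀ (p : ∀ i : Fin I, Fin (f i)) (i : Fin I), dig (e p) i.val = (p i : ℕ) := by
      intro p i
      simp only [hdig, dif_pos i.isLt, Equiv.symm_apply_apply, Fin.eta]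
    set z : Fin I → ℂ := fun i => Complex.exp (Complex.I * ((δ * t i.val : ℝ) : ℂ)) with hz
    have hstep : ∀ p : ∀ i : Fin I, Fin (f i),
        Complex.exp (Complex.I * (((δ * ∑ j ∈ Finset.range I, t j * dig (e p) j : ℝ)) : ℂ))
        = ∏ i : Fin I, z i ^ ((p i : ℕ)) := by
      intro p
      have hsum : ∑ j ∈ Finset.range I, t j * (dig (e p) j : ℝ)
          = ∑ i : Fin I, t i.val * ((p i : ℕ) : ℝ) := by
        rw [← Fin.sum_univ_eq_sum_range (fun j => t j * (dig (e p) j : ℝ)) I]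
        exact Finset.sum_congr rfl fun i _ => by rw [hdig_e p i]
      rw [hsum]
      have : Complex.I * ((δ * ∑ i : Fin I, t i.val * ((p i : ℕ) : ℝ) : ℝ) : ℂ)
          = ∑ i : Fin I, ((p i : ℕ) : ℂ) * (Complex.I * ((δ * t i.val : ℝ) : ℂ)) := by
        push_cast
        rw [Finset.mul_sum, Finset.mul_sum]
        exact Finset.sum_congr rfl fun i _ => by ring
      rw [this, Complex.exp_sum]
      exact Finset.prod_congr rfl fun i _ => by rw [← Complex.exp_nat_mul]
    simp only [hstep]
    rw [← Fintype.prod_sum (fun (i : Fin I) (j : Fin (f i)) => z i ^ (j : ℕ))]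
    apply Finset.prod_eq_zero (Finset.mem_univ (⟨k.val, hkI⟩ : Fin I))
    -- the k-th factor vanishes
    obtain ⟨m, hmnd, hmeq⟩ := tseq_null F D K dmin k.val
      (by rw [hF2 k.val hkI]; exact (hf ⟨k.val, hkI⟩).two_le) (hD0 k.val k.isLt) k.isLt
    have hFpos : (0:ℝ) < (F k.val : ℝ) := by
      have := hF1 k.val; positivity
    have hzval : z ⟨k.val, hkI⟩ = Complex.exp (Complex.I * ((2 * Real.pi * m / F k.val : ℝ) : ℂ)) := by
      simp only [hz]
      rw [← hmeq]
    apply geom_null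
    · -- z ≠ 1
      rw [hzval]
      intro hone
      rw [Complex.exp_eq_one_iff] at hone
      obtain ⟨n, hn⟩ := hone
      have : ((2 * Real.pi * m / F k.val : ℝ) : ℂ) = (n : ℂ) * (2 * Real.pi) := by
        have hn' : ((2 * Real.pi * m / F k.val : ℝ) : ℂ) * Complex.I
            = ((n : ℂ) * (2 * Real.pi)) * Complex.I := by
          calc ((2 * Real.pi * m / F k.val : ℝ) : ℂ) * Complex.I
              = Complex.I * ((2 * Real.pi * m / F k.val : ℝ) : ℂ) := by ring
            _ = (n : ℂ) * (2 * Real.pi * Complex.I) := hn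
            _ = ((n : ℂ) * (2 * Real.pi)) * Complex.I := by ring
        exact mul_right_cancel₀ Complex.I_ne_zero hn'
      have hreal : (2 * Real.pi * m / F k.val : ℝ) = n * (2 * Real.pi) := by
        exact_mod_cast this
      have hπ : (0:ℝ) < 2 * Real.pi := by positivity
      have hm : (m : ℝ) = n * F k.val := by
        field_simp at hreal
        nlinarith [hreal]
      have : (m : ℤ) = n * (F k.val : ℤ) := by exact_mod_cast hm
      exact hmnd (Int.natCast_dvd_natCast.mp ⟨n, by rw [this]; ring⟩)
    · -- z ^ f = 1
      rw [hzval, ← Complex.exp_nat_mul]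
      have hFne : ((F k.val : ℝ)) ≠ 0 := hFpos.ne'
      have hcast : f (⟨k.val, hkI⟩ : Fin I) = F k.val := (hF2 k.val hkI).symm
      rw [hcast]
      have : ((F k.val : ℕ) : ℂ) * (Complex.I * ((2 * Real.pi * m / F k.val : ℝ) : ℂ))
          = (m : ℤ) * (2 * Real.pi * Complex.I) := by
        have hFC : ((F k.val : ℕ) : ℂ) ≠ 0 := Nat.cast_ne_zero.mpr (by have := hF1 k.val; omega)
        push_cast
        field_simp
      rw [this, Complex.exp_int_mul_two_pi_mul_I]
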